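/- For every n ∈ [0,1] one has Ψ(n) ≤ Ψ(1), and Ψ(1) = ψ_B; that is, the maximum required joint loading over all portfolio compositions equals the stand-alone loading of the riskier business line B. (Lemma 1, maximum loading ψ_max = ψ_B.) -/

import Mathlib

/-- For every `n ∈ [0,1]`, `Ψ(n) ≤ Ψ(1)` and `Ψ(1) = ψ_B`; the maximum
required joint loading equals the stand-alone loading of the riskier line B. -/
theorem maximum_joint_loading
    (b ρ ψA πA πB : ℝ)
    (hb : 1 ≤ b) (hρ1 : -1 ≤ ρ) (hρ2 : ρ < 1)
    (hψA : 0 < ψA) (hπA : 0 < πA) (hπB : 0 < πB)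
    (lam1 lam2 ψB : ℝ)
    (hlam1 : lam1 = 1 + b ^ 2 - 2 * b * ρ) (hlam2 : lam2 = 1 - b * ρ)
    (hψB : ψB = b * ψA)
    (ntil : ℝ → ℝ)
    (hntil : ∀ n, ntil n = n * πB / ((1 - n) * πA + n * πB))
    (Ψ : ℝ → ℝ)
    (hΨ : ∀ n, Ψ n = ψA * Real.sqrt (lam1 * (ntil n) ^ 2 - 2 * lam2 * (ntil n) + 1)) :
    (∀ n ∈ Set.Icc (0 : ℝ) 1, Ψ n ≤ Ψ 1) ∧ Ψ 1 = ψB := by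
  have hb0 : 0 < b := lt_of_lt_of_le one_pos hb
  have hn1 : ntil 1 = 1 := by
    rw [hntil]; field_simp; ring
  have hΨ1 : Ψ 1 = ψB := by
    rw [hΨ, hn1, hψB, hlam1, hlam2]
    have : (1 + b ^ 2 - 2 * b * ρ) * 1 ^ 2 - 2 * (1 - b * ρ) * 1 + 1 = b ^ 2 := by ring
    rw [this, Real.sqrt_sq hb0.le]; ring
  refine ⟨fun n hn => ?_, hΨ1⟩
  obtain ⟨hn0, hn1'⟩ := hn
  set x := ntil n with hx
  have hD : 0 < (1 - n) * πA + n * πB := by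
    rcases lt_or_ge n 1 with h | h
    · have h1 : 0 < (1 - n) * πA := mul_pos (by linarith) hπA
      have h2 : 0 ≤ n * πB := mul_nonneg hn0 hπB.le
      linarith
    · have hn1'' : n = 1 := le_antisymm hn1' h
      subst hn1''; simpa using hπB
  have hx0 : 0 ≤ x := by
    rw [hx, hntil]
    exact div_nonneg (mul_nonneg hn0 hπB.le) hD.le
  have hx1 : x ≤ 1 := by
    rw [hx, hntil]
    rw [div_le_one hD]
    nlinarith [mul_nonneg (sub_nonneg.2 hn1') hπA.le]
  have hlam1pos : 0 ≤ lam1 := by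
    rw [hlam1]; nlinarith [sq_nonneg (b - ρ), sq_nonneg ρ]
  have key : lam1 * x ^ 2 - 2 * lam2 * x + 1 ≤ b ^ 2 := by
    rw [hlam1, hlam2]
    have h1 : 0 ≤ 1 + b ^ 2 - 2 * b * ρ := hlam1 ▸ hlam1pos
    nlinarith [mul_nonneg (mul_nonneg hx0 (sub_nonneg.2 hx1)) h1,
      mul_nonneg (sub_nonneg.2 hx1) (by nlinarith : (0:ℝ) ≤ b ^ 2 - 1)]
  rw [hΨ n, hΨ1, hψB]
  have h1 : Real.sqrt (lam1 * x ^ 2 - 2 * lam2 * x + 1) ≤ b := by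
    calc Real.sqrt (lam1 * x ^ 2 - 2 * lam2 * x + 1) ≤ Real.sqrt (b ^ 2) :=
          Real.sqrt_le_sqrt key
      _ = b := Real.sqrt_sq hb0.le
  calc ψA * Real.sqrt (lam1 * x ^ 2 - 2 * lam2 * x + 1) ≤ ψA * b :=
        mul_le_mul_of_nonneg_left h1 hψA.le
    _ = b * ψA := mul_comm _ _
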